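/- Let Y ∈ ℝ^{n×d}, x* ∈ ℝ^n, β > 0, and let p*_m be the primal training optimal value with m neurons. Then there exists m* ≤ n such that for every m ≥ m* + 1, p*_m = sup over z ∈ ℝ^n satisfying |zᵀ(Yu)_+| ≤ β for all u ∈ ℝ^d with ‖u‖_2 ≤ 1, of −(1/2)‖z − x*‖_2² + (1/2)‖x*‖_2². -/

import Mathlib

open Matrix Finset

noncomputable section

/-- Euclidean (ℓ2) norm of a vector in ℝ^k. -/
def l2 {k : ℕ} (x : Fin k → ℝ) : ℝ := Real.sqrt (∑ i, (x i) ^ 2)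

/-- Componentwise ReLU. -/
def relu {k : ℕ} (x : Fin k → ℝ) : Fin k → ℝ := fun i => max (x i) 0

/-- The set of ReLU sign-pattern matrices of `Y`: diagonal 0/1 matrices
`Diag(1_{Yu ≥ 0})` as `u` ranges over the closed unit ball. -/
def signPatterns {n d : ℕ} (Y : Matrix (Fin n) (Fin d) ℝ) :
    Set (Matrix (Fin n) (Fin n) ℝ) :=
  { M | ∃ u : Fin d → ℝ, l2 u ≤ 1 ∧
      M = Matrix.diagonal (fun i => if 0 ≤ Y.mulVec u i then (1 : ℝ) else 0) }

/-- Primal (non-convex) training objective with `m` neurons. -/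
def primalObj {n d : ℕ} (Y : Matrix (Fin n) (Fin d) ℝ) (xs : Fin n → ℝ) (β : ℝ)
    (m : ℕ) (u : Fin m → Fin d → ℝ) (v : Fin m → ℝ) : ℝ :=
  (1 / 2) * l2 ((∑ j, v j • relu (Y.mulVec (u j))) - xs) ^ 2
    + (β / 2) * ∑ j, (l2 (u j) ^ 2 + |v j| ^ 2)

/-- Optimal value of the primal training problem with `m` neurons. -/
def pStar {n d : ℕ} (Y : Matrix (Fin n) (Fin d) ℝ) (xs : Fin n → ℝ) (β : ℝ)
    (m : ℕ) : ℝ :=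
  sInf { c | ∃ u : Fin m → Fin d → ℝ, ∃ v : Fin m → ℝ, c = primalObj Y xs β m u v }

/-- Dual feasibility: `(2 Dᵢ − I) Y wᵢ ≥ 0` componentwise for every `i`. -/
def dualFeasible {n d ℓ : ℕ} (Y : Matrix (Fin n) (Fin d) ℝ)
    (D : Fin ℓ → Matrix (Fin n) (Fin n) ℝ) (w : Fin ℓ → Fin d → ℝ) : Prop :=
  ∀ i j, 0 ≤ ((2 • D i - 1).mulVec (Y.mulVec (w i))) j

/-- Convex dual objective. -/
def dualObj {n d ℓ : ℕ} (Y : Matrix (Fin n) (Fin d) ℝ) (xs : Fin n → ℝ) (β : ℝ)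
    (D : Fin ℓ → Matrix (Fin n) (Fin n) ℝ) (w z : Fin ℓ → Fin d → ℝ) : ℝ :=
  (1 / 2) * l2 ((∑ i, (D i).mulVec (Y.mulVec (w i - z i))) - xs) ^ 2
    + β * ∑ i, (l2 (w i) + l2 (z i))

/-- Optimal value of the convex dual program. -/
def dStar {n d ℓ : ℕ} (Y : Matrix (Fin n) (Fin d) ℝ) (xs : Fin n → ℝ) (β : ℝ)
    (D : Fin ℓ → Matrix (Fin n) (Fin n) ℝ) : ℝ :=
  sInf { c | ∃ w z : Fin ℓ → Fin d → ℝ,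
    dualFeasible Y D w ∧ dualFeasible Y D z ∧ c = dualObj Y xs β D w z }

end

noncomputable section Aux

open RealInnerProductSpace

abbrev EE (n : ℕ) := EuclideanSpace ℝ (Fin n)

def toE {k : ℕ} (x : Fin k → ℝ) : EE k := (WithLp.equiv 2 (Fin k → ℝ)).symm x
def ofE {k : ℕ} (x : EE k) : Fin k → ℝ := WithLp.equiv 2 (Fin k → ℝ) x

@[simp] lemma toE_apply {k : ℕ} (x : Fin k → ℝ) (i : Fin k) : toE x i = x i := rfl
@[simp] lemma toE_ofE {k : ℕ} (x : EE k) : toE (ofE x) = x := rfl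
@[simp] lemma ofE_toE {k : ℕ} (x : Fin k → ℝ) : ofE (toE x) = x := rfl

lemma l2_eq_norm {k : ℕ} (x : Fin k → ℝ) : l2 x = ‖toE x‖ := by
  rw [EuclideanSpace.norm_eq]; simp [l2, sq_abs]

lemma l2_nonneg {k : ℕ} (x : Fin k → ℝ) : 0 ≤ l2 x := Real.sqrt_nonneg _

lemma inner_toE {k : ℕ} (x y : Fin k → ℝ) : ⟪toE x, toE y⟫ = ∑ i, x i * y i := by
  simp [PiLp.inner_apply, RCLike.inner_apply]
  exact Finset.sum_congr rfl fun i _ => mul_comm _ _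

lemma toE_sub {k : ℕ} (x y : Fin k → ℝ) : toE (x - y) = toE x - toE y := rfl
lemma toE_smul {k : ℕ} (c : ℝ) (x : Fin k → ℝ) : toE (c • x) = c • toE x := rfl
lemma toE_zero {k : ℕ} : toE (0 : Fin k → ℝ) = 0 := rfl
lemma toE_sum {k m : ℕ} (f : Fin m → (Fin k → ℝ)) : toE (∑ j, f j) = ∑ j, toE (f j) := by
  ext i; simp [toE, Finset.sum_apply]

lemma relu_zero {k : ℕ} : relu (0 : Fin k → ℝ) = 0 := by
  funext i; simp [relu]

lemma relu_smul {k : ℕ} {c : ℝ} (hc : 0 ≤ c) (x : Fin k → ℝ) :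
    relu (c • x) = c • relu x := by
  funext i
  simp only [relu, Pi.smul_apply, smul_eq_mul]
  rw [mul_max_of_nonneg _ _ hc, mul_zero]

lemma l2_eq_zero {k : ℕ} {x : Fin k → ℝ} (h : l2 x = 0) : x = 0 := by
  rw [l2_eq_norm] at h
  have := norm_eq_zero.mp h
  funext i
  have : toE x i = (0 : EE k) i := by rw [this]
  simpa using this

variable {n d : ℕ} (Y : Matrix (Fin n) (Fin d) ℝ)

/-- The atom `(Yu)₊` as an element of Euclidean space. -/
def atom (u : Fin d → ℝ) : EE n := toE (relu (Y.mulVec u))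

lemma atom_zero : atom Y (0 : Fin d → ℝ) = 0 := by
  simp [atom, Matrix.mulVec_zero, relu_zero, toE_zero]

lemma atom_smul {c : ℝ} (hc : 0 ≤ c) (u : Fin d → ℝ) :
    atom Y (c • u) = c • atom Y u := by
  simp [atom, Matrix.mulVec_smul, relu_smul hc, toE_smul]

/-- Dual feasible set, inside Euclidean space. -/
def Kfeas (β : ℝ) : Set (EE n) :=
  {z | ∀ u : Fin d → ℝ, l2 u ≤ 1 → |⟪z, atom Y u⟫| ≤ β}

lemma zero_mem_Kfeas {β : ℝ} (hβ : 0 ≤ β) : (0 : EE n) ∈ Kfeas Y β := by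
  intro u _; simp [hβ]

lemma Kfeas_inner_le {β : ℝ} (hβ : 0 ≤ β) {z : EE n} (hz : z ∈ Kfeas Y β)
    (u : Fin d → ℝ) : |⟪z, atom Y u⟫| ≤ β * l2 u := by
  rcases eq_or_lt_of_le (l2_nonneg u) with h0 | h0
  · have hu : u = 0 := l2_eq_zero h0.symm
    subst hu
    simp [atom_zero, ← h0]
  · set c := l2 u with hc
    have hu' : u = c • ((c⁻¹) • u) := by
      rw [smul_smul, mul_inv_cancel₀ (ne_of_gt h0), one_smul]
    have hl : l2 (c⁻¹ • u) ≤ 1 := by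
      rw [l2_eq_norm, toE_smul, norm_smul]
      have hc' : ‖toE u‖ = c := (l2_eq_norm u).symm
      rw [hc', Real.norm_eq_abs, abs_of_pos (inv_pos.mpr h0), inv_mul_cancel₀ (ne_of_gt h0)]
    calc |⟪z, atom Y u⟫| = |⟪z, atom Y (c • (c⁻¹ • u))⟫| := by rw [← hu']
      _ = c * |⟪z, atom Y (c⁻¹ • u)⟫| := by
          rw [atom_smul Y (le_of_lt h0), inner_smul_right, abs_mul, abs_of_pos h0]
      _ ≤ c * β := by
          have := hz _ hl
          exact mul_le_mul_of_nonneg_left this (le_of_lt h0)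
      _ = β * l2 u := by rw [mul_comm]

end Aux
noncomputable section Aux2
open RealInnerProductSpace

variable {n d : ℕ} (Y : Matrix (Fin n) (Fin d) ℝ) (xs : Fin n → ℝ) {β : ℝ}

/-- Dual objective in inner-product form. -/
lemma dual_value_eq (z : Fin n → ℝ) :
    -(1 / 2) * l2 (z - xs) ^ 2 + (1 / 2) * l2 xs ^ 2
      = ⟪toE z, toE xs⟫ - (1 / 2) * ‖toE z‖ ^ 2 := by
  rw [l2_eq_norm, l2_eq_norm, toE_sub, norm_sub_sq_real]
  ring

/-- Weak duality. -/
lemma weak_duality (hβ : 0 ≤ β) {z : EE n} (hz : z ∈ Kfeas Y β)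
    (m : ℕ) (u : Fin m → Fin d → ℝ) (v : Fin m → ℝ) :
    ⟪z, toE xs⟫ - (1 / 2) * ‖z‖ ^ 2 ≤ primalObj Y xs β m u v := by
  set F : EE n := ∑ j, v j • atom Y (u j) with hF
  set r : EE n := F - toE xs with hr
  have hFsum : toE ((∑ j, v j • relu (Y.mulVec (u j))) - xs) = r := by
    rw [hr, hF]
    rw [toE_sub, toE_sum]; rfl
  have h1 : ⟪z, F⟫ ≤ (β / 2) * ∑ j, (l2 (u j) ^ 2 + |v j| ^ 2) := by
    rw [hF, inner_sum]
    rw [Finset.mul_sum]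
    apply Finset.sum_le_sum
    intro j _
    rw [real_inner_smul_right]
    have h2 : |⟪z, atom Y (u j)⟫| ≤ β * l2 (u j) := Kfeas_inner_le Y hβ hz (u j)
    have h3 : v j * ⟪z, atom Y (u j)⟫ ≤ |v j| * (β * l2 (u j)) := by
      have ha : v j * ⟪z, atom Y (u j)⟫ ≤ |v j| * |⟪z, atom Y (u j)⟫| := by
        rw [← abs_mul]; exact le_abs_self _
      exact ha.trans (mul_le_mul_of_nonneg_left h2 (abs_nonneg _))
    have h4 : |v j| * (β * l2 (u j)) ≤ β / 2 * (l2 (u j) ^ 2 + |v j| ^ 2) := by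
      have h5 : 0 ≤ (l2 (u j) - |v j|) ^ 2 := sq_nonneg _
      nlinarith [abs_nonneg (v j), l2_nonneg (u j)]
    linarith
  have h6 : -⟪z, r⟫ - (1 / 2) * ‖z‖ ^ 2 ≤ (1 / 2) * ‖r‖ ^ 2 := by
    have := sq_nonneg ‖z + r‖
    rw [norm_add_sq_real] at this
    linarith
  have h7 : ⟪z, toE xs⟫ = ⟪z, F⟫ - ⟪z, r⟫ := by
    rw [hr, inner_sub_right]; ring
  have h8 : l2 ((∑ j, v j • relu (Y.mulVec (u j))) - xs) = ‖r‖ := by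
    rw [l2_eq_norm, hFsum]
  rw [primalObj, h8, h7]
  linarith

end Aux2
noncomputable section Aux3
open RealInnerProductSpace

variable {n d : ℕ} (Y : Matrix (Fin n) (Fin d) ℝ) {β : ℝ}

lemma Kfeas_convex : Convex ℝ (Kfeas Y β : Set (EE n)) := by
  intro z hz w hw a b ha hb hab
  intro u hu
  have hz' := hz u hu
  have hw' := hw u hu
  have : ⟪a • z + b • w, atom Y u⟫ = a * ⟪z, atom Y u⟫ + b * ⟪w, atom Y u⟫ := by
    rw [inner_add_left, real_inner_smul_left, real_inner_smul_left]
  rw [this]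
  calc |a * ⟪z, atom Y u⟫ + b * ⟪w, atom Y u⟫|
      ≤ |a * ⟪z, atom Y u⟫| + |b * ⟪w, atom Y u⟫| := abs_add_le _ _
    _ = a * |⟪z, atom Y u⟫| + b * |⟪w, atom Y u⟫| := by
        rw [abs_mul, abs_mul, abs_of_nonneg ha, abs_of_nonneg hb]
    _ ≤ a * β + b * β := by
        exact add_le_add (mul_le_mul_of_nonneg_left hz' ha) (mul_le_mul_of_nonneg_left hw' hb)
    _ = β := by rw [← add_mul, hab, one_mul]

lemma Kfeas_closed : IsClosed (Kfeas Y β : Set (EE n)) := by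
  have : (Kfeas Y β : Set (EE n)) =
      ⋂ (u : Fin d → ℝ), {z : EE n | l2 u ≤ 1 → |⟪z, atom Y u⟫| ≤ β} := by
    ext z; simp [Kfeas, Set.mem_iInter]
  rw [this]
  apply isClosed_iInter
  intro u
  by_cases hu : l2 u ≤ 1
  · have : {z : EE n | l2 u ≤ 1 → |⟪z, atom Y u⟫| ≤ β}
        = {z : EE n | |⟪z, atom Y u⟫| ≤ β} := by
      ext z; simp [hu]
    rw [this]
    have hcont : Continuous fun z : EE n => |⟪z, atom Y u⟫| :=
      (continuous_id.inner continuous_const).abs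
    exact isClosed_le hcont continuous_const
  · have : {z : EE n | l2 u ≤ 1 → |⟪z, atom Y u⟫| ≤ β} = Set.univ := by
      ext z; simp [hu]
    rw [this]; exact isClosed_univ

/-- Projection of `xs` onto the feasible set, with its variational property. -/
lemma exists_proj (xs : Fin n → ℝ) (hβ : 0 ≤ β) :
    ∃ zs ∈ Kfeas Y β, ∀ w ∈ Kfeas Y β, ⟪toE xs - zs, w - zs⟫ ≤ 0 := by
  obtain ⟨zs, hzs, hmin⟩ := exists_norm_eq_iInf_of_complete_convex
    ⟨0, zero_mem_Kfeas Y hβ⟩ (Kfeas_closed Y).isComplete (Kfeas_convex Y) (toE xs)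
  exact ⟨zs, hzs, (norm_eq_iInf_iff_real_inner_le_zero (Kfeas_convex Y) hzs).mp hmin⟩

/-- Positive atoms. -/
def Apos : Set (EE n) := {a | ∃ u : Fin d → ℝ, l2 u ≤ 1 ∧ a = atom Y u}

/-- Symmetrized atoms. -/
def Asym : Set (EE n) := {a | ∃ s : ℝ, (s = 1 ∨ s = -1) ∧ ∃ u : Fin d → ℝ, l2 u ≤ 1 ∧ a = s • atom Y u}

lemma zero_mem_Asym : (0 : EE n) ∈ Asym Y := by
  refine ⟨1, Or.inl rfl, 0, ?_, ?_⟩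
  · simp [l2]
  · rw [atom_zero, smul_zero]

lemma isCompact_Asym : IsCompact (Asym Y) := by
  have h1 : Asym Y = (fun p : ℝ × EE d => p.1 • atom Y (ofE p.2)) ''
      (({1, -1} : Set ℝ) ×ˢ Metric.closedBall (0 : EE d) 1) := by
    ext a
    constructor
    · rintro ⟨s, hs, u, hu, rfl⟩
      refine ⟨(s, toE u), ⟨by simpa using hs, ?_⟩, by simp⟩
      · rw [Metric.mem_closedBall, dist_zero_right, ← l2_eq_norm]; exact hu
    · rintro ⟨⟨s, u⟩, ⟨hs, hu⟩, rfl⟩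
      refine ⟨s, by simpa using hs, ofE u, ?_, rfl⟩
      rw [l2_eq_norm, toE_ofE]
      rw [Metric.mem_closedBall, dist_zero_right] at hu
      exact hu
  rw [h1]
  have hrelu : Continuous fun u : EE d => relu (Y.mulVec (ofE u)) := by
    apply continuous_pi; intro i
    have hmv : Continuous fun u : EE d => Y.mulVec (ofE u) i := by
      simp only [Matrix.mulVec, dotProduct]
      exact continuous_finset_sum _ fun j _ =>
        continuous_const.mul ((continuous_apply j).comp (PiLp.continuous_ofLp 2 _))
    exact hmv.max continuous_const
  have hat : Continuous fun u : EE d => atom Y (ofE u) :=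
    (PiLp.continuous_toLp 2 (fun _ : Fin n => ℝ)).comp hrelu
  apply IsCompact.image
  · have hfin : ({1, -1} : Set ℝ).Finite := (Set.finite_singleton (-1)).insert 1
    exact hfin.isCompact.prod (isCompact_closedBall 0 1)
  · exact continuous_fst.smul (hat.comp continuous_snd)
end Aux3
noncomputable section Aux4
open RealInnerProductSpace

variable {n d : ℕ} (Y : Matrix (Fin n) (Fin d) ℝ)

/-- All convex combinations of `n+1` atoms. -/
def Dset : Set (EE n) :=
  (fun p : (Fin (n+1) → ℝ) × (Fin (n+1) → EE n) => ∑ j, p.1 j • p.2 j) ''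
    ((stdSimplex ℝ (Fin (n+1))) ×ˢ (Set.univ.pi fun _ => Asym Y))

lemma Dset_subset_hull : Dset Y ⊆ convexHull ℝ (Asym Y) := by
  rintro x ⟨⟨w, a⟩, ⟨hw, ha⟩, rfl⟩
  exact (convex_convexHull ℝ _).sum_mem (fun i _ => hw.1 i) hw.2
    (fun i _ => subset_convexHull ℝ _ (ha i (Set.mem_univ i)))

lemma hull_subset_Dset : convexHull ℝ (Asym Y) ⊆ Dset Y := by
  classical
  intro x hx
  obtain ⟨ι, hι, z, w, hrange, hAI, hpos, hsum, hxx⟩ :=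
    eq_pos_convex_span_of_mem_convexHull hx
  have hcard : Fintype.card ι ≤ n + 1 := by
    have h1 := hAI.card_le_finrank_succ
    have h2 : Module.finrank ℝ (vectorSpan ℝ (Set.range z)) ≤ Module.finrank ℝ (EE n) :=
      (vectorSpan ℝ (Set.range z)).finrank_le
    have h3 : Module.finrank ℝ (EE n) = n := finrank_euclideanSpace_fin
    omega
  obtain ⟨f⟩ : Nonempty (ι ↪ Fin (n+1)) :=
    Function.Embedding.nonempty_of_card_le (by rw [Fintype.card_fin]; exact hcard)
  set w' : Fin (n+1) → ℝ := fun j => if h : ∃ i, f i = j then w h.choose else 0 with hw'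
  set a' : Fin (n+1) → EE n := fun j => if h : ∃ i, f i = j then z h.choose else 0 with ha'
  have hchoose : ∀ i : ι, (⟨i, rfl⟩ : ∃ i', f i' = f i).choose = i := by
    intro i
    exact f.injective (⟨i, rfl⟩ : ∃ i', f i' = f i).choose_spec
  have hw'f : ∀ i, w' (f i) = w i := by
    intro i
    rw [hw']
    simp only
    rw [dif_pos ⟨i, rfl⟩, hchoose i]
  have ha'f : ∀ i, a' (f i) = z i := by
    intro i
    rw [ha']
    simp only
    rw [dif_pos ⟨i, rfl⟩, hchoose i]
  have hsum_eq : ∀ {M : Type} [AddCommMonoid M] (g : Fin (n+1) → M),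
      (∀ j, (¬ ∃ i, f i = j) → g j = 0) → ∑ j, g j = ∑ i, g (f i) := by
    intro M _ g hg
    rw [← Finset.sum_map Finset.univ f g]
    apply (Finset.sum_subset (Finset.subset_univ _) _).symm
    intro j _ hj
    apply hg
    rintro ⟨i, hi⟩
    exact hj (Finset.mem_map.mpr ⟨i, Finset.mem_univ i, hi⟩)
  refine ⟨(w', a'), ⟨⟨fun j => ?_, ?_⟩, fun j _ => ?_⟩, ?_⟩
  · by_cases h : ∃ i, f i = j
    · rw [hw']; simp only; rw [dif_pos h]; exact (hpos _).le
    · rw [hw']; simp only; rw [dif_neg h]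
  · rw [hsum_eq w' (fun j hj => by rw [hw']; simp only; rw [dif_neg hj])]
    calc ∑ i, w' (f i) = ∑ i, w i := by
          exact Finset.sum_congr rfl fun i _ => hw'f i
      _ = 1 := hsum
  · by_cases h : ∃ i, f i = j
    · rw [ha']; simp only; rw [dif_pos h]
      exact hrange ⟨h.choose, rfl⟩
    · rw [ha']; simp only; rw [dif_neg h]
      exact zero_mem_Asym Y
  · show ∑ j, w' j • a' j = x
    rw [hsum_eq (fun j => w' j • a' j)
      (fun j hj => by rw [hw']; simp only; rw [dif_neg hj, zero_smul])]
    calc ∑ i, w' (f i) • a' (f i) = ∑ i, w i • z i := by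
          exact Finset.sum_congr rfl fun i _ => by rw [hw'f i, ha'f i]
      _ = x := hxx

lemma hull_eq_Dset : convexHull ℝ (Asym Y) = Dset Y :=
  le_antisymm (hull_subset_Dset Y) (Dset_subset_hull Y)

lemma isCompact_hull : IsCompact (convexHull ℝ (Asym Y)) := by
  rw [hull_eq_Dset]
  apply IsCompact.image
  · exact (isCompact_stdSimplex _ _).prod (isCompact_univ_pi fun _ => isCompact_Asym Y)
  · exact continuous_finset_sum _ fun j _ =>
      ((continuous_apply j).comp continuous_fst).smul ((continuous_apply j).comp continuous_snd)

end Aux4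
noncomputable section Aux5
open RealInnerProductSpace Pointwise

variable {n d : ℕ} (Y : Matrix (Fin n) (Fin d) ℝ) {β : ℝ}

lemma mem_smul_hull (hβ : 0 < β) {r : EE n} {S' : ℝ}
    (hS'0 : 0 ≤ S')
    (hsup : ∀ z ∈ Kfeas Y β, ⟪r, z⟫ ≤ S') :
    β • r ∈ S' • (convexHull ℝ (Asym Y)) := by
  by_contra hmem
  have hC : Convex ℝ (S' • convexHull ℝ (Asym Y)) := (convex_convexHull ℝ _).smul S'
  have hclosed : IsClosed (S' • convexHull ℝ (Asym Y)) :=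
    ((isCompact_hull Y).smul S').isClosed
  obtain ⟨f, u₀, hfa, hfx⟩ := geometric_hahn_banach_closed_point hC hclosed hmem
  obtain ⟨a₀, ha₀, hmax'⟩ := (isCompact_Asym Y).exists_isMaxOn ⟨0, zero_mem_Asym Y⟩
    f.continuous.continuousOn
  have hmax : ∀ a ∈ Asym Y, f a ≤ f a₀ := fun a ha => isMaxOn_iff.mp hmax' a ha
  set M := f a₀ with hMdef
  have hM0 : 0 ≤ M := by
    have := hmax 0 (zero_mem_Asym Y)
    rwa [map_zero] at this
  have hfr : 0 < f (β • r) := by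
    have h0m : (0 : EE n) ∈ S' • convexHull ℝ (Asym Y) :=
      ⟨0, subset_convexHull ℝ _ (zero_mem_Asym Y), smul_zero S'⟩
    have := (hfa 0 h0m).trans hfx
    rwa [map_zero] at this
  have hfrβ : f (β • r) = β * f r := by rw [_root_.map_smul, smul_eq_mul]
  have hfr' : 0 < f r := by
    rw [hfrβ] at hfr
    by_contra hneg
    push_neg at hneg
    nlinarith
  set wv := (InnerProductSpace.toDual ℝ (EE n)).symm f with hwvdef
  have hwv : ∀ x, ⟪wv, x⟫ = f x := fun x => InnerProductSpace.toDual_symm_apply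
  have habs : ∀ u : Fin d → ℝ, l2 u ≤ 1 → |f (atom Y u)| ≤ M := by
    intro u hu
    have h1 : f (atom Y u) ≤ M := hmax _ ⟨1, Or.inl rfl, u, hu, (one_smul ℝ _).symm⟩
    have h2 : f (-(atom Y u)) ≤ M := hmax _ ⟨-1, Or.inr rfl, u, hu, (neg_one_smul ℝ _).symm⟩
    rw [map_neg] at h2
    rw [abs_le]; constructor <;> linarith
  rcases eq_or_lt_of_le hM0 with hM | hM
  · -- M = 0 : all atoms evaluate to 0 under f; scale wv arbitrarily
    have hz : ∀ t : ℝ, ((t • wv) : EE n) ∈ Kfeas Y β := by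
      intro t u hu
      rw [real_inner_smul_left, hwv]
      have h1 := habs u hu
      rw [← hM] at h1
      have h2 : f (atom Y u) = 0 := abs_eq_zero.mp (le_antisymm h1 (abs_nonneg _))
      rw [h2, mul_zero, abs_zero]
      exact hβ.le
    have hts := hsup (((S' + 1) / f r) • wv) (hz _)
    rw [real_inner_smul_right, real_inner_comm, hwv,
      div_mul_cancel₀ _ (ne_of_gt hfr')] at hts
    linarith
  · -- M > 0 : rescale wv into the feasible set
    have hz : (((β / M) • wv) : EE n) ∈ Kfeas Y β := by
      intro u hu
      rw [real_inner_smul_left, hwv, abs_mul, abs_of_pos (by positivity)]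
      calc (β / M) * |f (atom Y u)| ≤ (β / M) * M :=
            mul_le_mul_of_nonneg_left (habs u hu) (by positivity)
        _ = β := div_mul_cancel₀ β (ne_of_gt hM)
    have h1 := hsup _ hz
    rw [real_inner_smul_right, real_inner_comm, hwv] at h1
    have h2 : f (S' • a₀) < f (β • r) :=
      lt_trans (hfa _ ⟨a₀, subset_convexHull ℝ _ ha₀, rfl⟩) hfx
    rw [_root_.map_smul, smul_eq_mul, hfrβ] at h2
    have h3 : β * f r ≤ S' * M := by
      have h4 := mul_le_mul_of_nonneg_right h1 (le_of_lt hM)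
      have h5 : β / M * f r * M = β * f r := by
        field_simp
      rw [h5] at h4
      exact h4
    linarith

end Aux5
noncomputable section Aux6
open RealInnerProductSpace

variable {n d : ℕ} (Y : Matrix (Fin n) (Fin d) ℝ) {β : ℝ}

lemma l2_smul (a : ℝ) {k : ℕ} (x : Fin k → ℝ) : l2 (a • x) = |a| * l2 x := by
  rw [l2_eq_norm, l2_eq_norm, toE_smul, norm_smul, Real.norm_eq_abs]

lemma sum_dite_fin {M : Type} [AddCommMonoid M] {m N : ℕ} (hm : N ≤ m)
    (g : Fin N → M) :
    (∑ j : Fin m, if h : (j : ℕ) < N then g ⟨j, h⟩ else 0) = ∑ j' : Fin N, g j' := by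
  classical
  set g' : ℕ → M := fun k => if h : k < N then g ⟨k, h⟩ else 0 with hg'
  have h1 : (∑ j : Fin m, if h : (j : ℕ) < N then g ⟨j, h⟩ else 0)
      = ∑ k ∈ Finset.range m, g' k := by
    rw [← Fin.sum_univ_eq_sum_range g' m]
  have h2 : ∑ k ∈ Finset.range m, g' k = ∑ k ∈ Finset.range N, g' k := by
    apply (Finset.sum_subset (Finset.range_subset_range.mpr hm) _).symm
    intro k _ hk
    rw [Finset.mem_range] at hk
    exact dif_neg hk
  have h3 : ∑ k ∈ Finset.range N, g' k = ∑ j' : Fin N, g j' := by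
    rw [← Fin.sum_univ_eq_sum_range g' N]
    exact Finset.sum_congr rfl fun j' _ => by
      rw [hg']; simp only; rw [dif_pos j'.isLt]
  rw [h1, h2, h3]

lemma primal_construction (hβ : 0 < β) (xs : Fin n → ℝ) (m : ℕ) (hm : n + 1 ≤ m)
    (c : Fin (n+1) → ℝ) (hc : ∀ j, 0 ≤ c j)
    (s : Fin (n+1) → ℝ) (hs : ∀ j, s j = 1 ∨ s j = -1)
    (uu : Fin (n+1) → Fin d → ℝ) (huu : ∀ j, l2 (uu j) ≤ 1) :
    ∃ u : Fin m → Fin d → ℝ, ∃ v : Fin m → ℝ,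
      primalObj Y xs β m u v ≤
        (1/2) * ‖(∑ j, (c j * s j) • atom Y (uu j)) - toE xs‖^2 + β * ∑ j, c j := by
  classical
  -- neuron data for each atom index
  set T : Fin (n+1) → ℝ := fun j => Real.sqrt (c j / l2 (uu j)) with hT
  set U : Fin (n+1) → Fin d → ℝ :=
    fun j => if c j * l2 (uu j) = 0 then 0 else T j • uu j with hU
  set V : Fin (n+1) → ℝ :=
    fun j => if c j * l2 (uu j) = 0 then 0 else s j * c j / T j with hV
  have key : ∀ j : Fin (n+1),
      (V j • relu (Y.mulVec (U j)) = (c j * s j) • relu (Y.mulVec (uu j)))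
      ∧ (l2 (U j) ^ 2 + |V j| ^ 2 ≤ 2 * c j) := by
    intro j
    by_cases h0 : c j * l2 (uu j) = 0
    · constructor
      · rw [hU, hV]; simp only [if_pos h0]
        rcases mul_eq_zero.mp h0 with hc0 | hL0
        · simp [hc0, Matrix.mulVec_zero, relu_zero]
        · have huz : uu j = 0 := l2_eq_zero hL0
          simp [huz, Matrix.mulVec_zero, relu_zero]
      · rw [hU, hV]; simp only [if_pos h0]
        have : l2 (0 : Fin d → ℝ) = 0 := by simp [l2]
        rw [this]
        simp only [abs_zero]
        nlinarith [hc j]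
    · have hcpos : 0 < c j := lt_of_le_of_ne (hc j) fun h => h0 (by rw [← h, zero_mul])
      have hLpos : 0 < l2 (uu j) := by
        rcases eq_or_lt_of_le (l2_nonneg (uu j)) with h | h
        · exact absurd (by rw [← h, mul_zero]) h0
        · exact h
      have hTpos : 0 < T j := Real.sqrt_pos.mpr (by positivity)
      have hT2 : T j ^ 2 = c j / l2 (uu j) := Real.sq_sqrt (by positivity)
      constructor
      · rw [hU, hV]; simp only [if_neg h0]
        rw [Matrix.mulVec_smul, relu_smul hTpos.le, smul_smul]
        congr 1
        field_simp
      · rw [hU, hV]; simp only [if_neg h0]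
        rw [l2_smul, abs_of_pos hTpos, abs_div, abs_mul]
        rcases hs j with h1 | h1 <;>
          rw [h1] <;>
          · rw [mul_pow, div_pow, abs_of_pos hTpos, hT2]
            have hc' : |c j| = c j := abs_of_pos hcpos
            simp only [abs_one, abs_neg, one_mul, hc']
            have e1 : c j / l2 (uu j) * l2 (uu j) ^ 2 = c j * l2 (uu j) := by
              field_simp
            have e2 : c j ^ 2 / (c j / l2 (uu j)) = c j * l2 (uu j) := by
              rw [div_div_eq_mul_div, pow_two, mul_comm (c j) (c j), mul_assoc, mul_div_assoc, mul_div_cancel_left₀ _ (ne_of_gt hcpos)]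
            rw [e1, e2]
            nlinarith [huu j, hcpos.le, hLpos.le]
  -- assemble the m-neuron point
  refine ⟨fun j => if h : (j : ℕ) < n + 1 then U ⟨j, h⟩ else 0,
          fun j => if h : (j : ℕ) < n + 1 then V ⟨j, h⟩ else 0, ?_⟩
  rw [primalObj]
  have hvec : (∑ j : Fin m,
      (if h : (j : ℕ) < n + 1 then V ⟨j, h⟩ else 0) •
        relu (Y.mulVec (if h : (j : ℕ) < n + 1 then U ⟨j, h⟩ else 0)))
      = ∑ j', (c j' * s j') • relu (Y.mulVec (uu j')) := by
    have : ∀ j : Fin m,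
        (if h : (j : ℕ) < n + 1 then V ⟨j, h⟩ else 0) •
          relu (Y.mulVec (if h : (j : ℕ) < n + 1 then U ⟨j, h⟩ else 0))
        = if h : (j : ℕ) < n + 1 then (c ⟨j, h⟩ * s ⟨j, h⟩) • relu (Y.mulVec (uu ⟨j, h⟩)) else 0 := by
      intro j
      by_cases h : (j : ℕ) < n + 1
      · rw [dif_pos h, dif_pos h, dif_pos h, (key ⟨j, h⟩).1]
      · rw [dif_neg h, dif_neg h, dif_neg h, zero_smul]
    rw [Finset.sum_congr rfl fun j _ => this j]
    exact sum_dite_fin hm (fun j' : Fin (n+1) => (c j' * s j') • relu (Y.mulVec (uu j')))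
  have hpen : (∑ j : Fin m,
      (l2 (if h : (j : ℕ) < n + 1 then U ⟨j, h⟩ else 0) ^ 2
        + |if h : (j : ℕ) < n + 1 then V ⟨j, h⟩ else 0| ^ 2))
      ≤ ∑ j', 2 * c j' := by
    have h2 : (∑ j' : Fin (n+1), (2 * c j'))
        = ∑ j : Fin m, (if h : (j : ℕ) < n + 1 then 2 * c ⟨j, h⟩ else 0) :=
      (sum_dite_fin hm (fun j' : Fin (n+1) => 2 * c j')).symm
    rw [h2]
    apply Finset.sum_le_sum
    intro j _
    by_cases h : (j : ℕ) < n + 1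
    · rw [dif_pos h, dif_pos h, dif_pos h]
      exact (key ⟨j, h⟩).2
    · rw [dif_neg h, dif_neg h, dif_neg h]
      simp [l2]
  have hnorm : l2 ((∑ j : Fin m,
      (if h : (j : ℕ) < n + 1 then V ⟨j, h⟩ else 0) •
        relu (Y.mulVec (if h : (j : ℕ) < n + 1 then U ⟨j, h⟩ else 0))) - xs)
      = ‖(∑ j', (c j' * s j') • atom Y (uu j')) - toE xs‖ := by
    rw [hvec, l2_eq_norm]
    rw [toE_sub, toE_sum]; rfl
  rw [hnorm]
  have hβ2 : (0 : ℝ) ≤ β / 2 := by positivity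
  have := mul_le_mul_of_nonneg_left hpen hβ2
  have hhalf : β / 2 * ∑ j', 2 * c j' = β * ∑ j', c j' := by
    rw [Finset.mul_sum, Finset.mul_sum]
    exact Finset.sum_congr rfl fun j' _ => by ring
  linarith [this, hhalf ▸ this]

end Aux6


open RealInnerProductSpace Pointwise in
/-- **Semi-infinite strong dual.** There exists `m* ≤ n` such that
for every `m ≥ m* + 1`, the primal optimal value equals the value of the
semi-infinite dual `sup { −(1/2)‖z − x*‖² + (1/2)‖x*‖² : |zᵀ(Yu)₊| ≤ β ∀ ‖u‖₂ ≤ 1 }`. -/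
theorem semi_infinite_dual {n d : ℕ} (Y : Matrix (Fin n) (Fin d) ℝ)
    (xs : Fin n → ℝ) (β : ℝ) (hβ : 0 < β) :
    ∃ mstar ≤ n, ∀ m ≥ mstar + 1,
      pStar Y xs β m =
        sSup { c | ∃ z : Fin n → ℝ,
          (∀ u : Fin d → ℝ, l2 u ≤ 1 → |∑ i, z i * relu (Y.mulVec u) i| ≤ β) ∧
          c = -(1 / 2) * l2 (z - xs) ^ 2 + (1 / 2) * l2 xs ^ 2 } := by
  classical
  refine ⟨n, le_refl n, fun m hm => ?_⟩
  set Dv : Set ℝ := { c | ∃ z : Fin n → ℝ,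
      (∀ u : Fin d → ℝ, l2 u ≤ 1 → |∑ i, z i * relu (Y.mulVec u) i| ≤ β) ∧
      c = -(1 / 2) * l2 (z - xs) ^ 2 + (1 / 2) * l2 xs ^ 2 } with hDv
  set Pv : Set ℝ := { c | ∃ u : Fin m → Fin d → ℝ, ∃ v : Fin m → ℝ,
      c = primalObj Y xs β m u v } with hPv
  -- feasibility transfer
  have hfeas_iff : ∀ z : Fin n → ℝ,
      (∀ u : Fin d → ℝ, l2 u ≤ 1 → |∑ i, z i * relu (Y.mulVec u) i| ≤ β)
        ↔ toE z ∈ Kfeas Y β := by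
    intro z
    constructor
    · intro h u hu
      rw [show (atom Y u : EE n) = toE (relu (Y.mulVec u)) from rfl, inner_toE]
      exact h u hu
    · intro h u hu
      have := h u hu
      rw [show (atom Y u : EE n) = toE (relu (Y.mulVec u)) from rfl, inner_toE] at this
      exact this
  have hPne : Pv.Nonempty := ⟨primalObj Y xs β m 0 0, 0, 0, rfl⟩
  have hPbdd : BddBelow Pv := by
    refine ⟨0, ?_⟩
    rintro p ⟨u, v, rfl⟩
    rw [primalObj]
    apply add_nonneg
    · exact mul_nonneg (by norm_num) (sq_nonneg _)
    · apply mul_nonneg (by positivity)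
      exact Finset.sum_nonneg fun j _ => add_nonneg (sq_nonneg _) (sq_nonneg _)
  have hDne : Dv.Nonempty := by
    refine ⟨-(1 / 2) * l2 ((0 : Fin n → ℝ) - xs) ^ 2 + (1 / 2) * l2 xs ^ 2, 0, ?_, rfl⟩
    intro u _
    simp [hβ.le]
  have hDbdd : BddAbove Dv := by
    refine ⟨(1 / 2) * ‖toE xs‖ ^ 2, ?_⟩
    rintro c ⟨z, hz, rfl⟩
    rw [dual_value_eq]
    have h0 : 0 ≤ ‖toE z - toE xs‖ ^ 2 := sq_nonneg _
    rw [norm_sub_sq_real] at h0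
    linarith
  -- direction 1 : sSup Dv ≤ pStar
  have hub : sSup Dv ≤ pStar Y xs β m := by
    apply csSup_le hDne
    rintro c ⟨z, hz, rfl⟩
    rw [dual_value_eq]
    apply le_csInf hPne
    rintro p ⟨u, v, rfl⟩
    exact weak_duality Y xs hβ.le ((hfeas_iff z).mp hz) m u v
  -- direction 2 : pStar ≤ sSup Dv, via projection + separation + Carathéodory
  obtain ⟨zs, hzs, hproj⟩ := exists_proj Y xs hβ.le
  set r : EE n := toE xs - zs with hr
  set S' : ℝ := ⟪r, zs⟫ with hS'
  have hsup : ∀ z ∈ Kfeas Y β, ⟪r, z⟫ ≤ S' := by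
    intro z hz
    have := hproj z hz
    rw [inner_sub_right] at this
    linarith
  have hS'0 : 0 ≤ S' := by
    have := hsup 0 (zero_mem_Kfeas Y hβ.le)
    rwa [inner_zero_right] at this
  have hmem := mem_smul_hull Y hβ hS'0 hsup
  rw [hull_eq_Dset] at hmem
  obtain ⟨x, hx, hxe⟩ := Set.mem_smul_set.mp hmem
  obtain ⟨⟨w, a⟩, ⟨hw, ha⟩, rfl⟩ := hx
  dsimp only at hxe hw ha
  choose sgn hsgn uu huu haeq using fun j => ha j (Set.mem_univ j)
  set c : Fin (n+1) → ℝ := fun j => β⁻¹ * (S' * w j) with hc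
  have hcnn : ∀ j, 0 ≤ c j := fun j =>
    mul_nonneg (inv_nonneg.mpr hβ.le) (mul_nonneg hS'0 (hw.1 j))
  have hr_eq : (∑ j, (c j * sgn j) • atom Y (uu j)) = r := by
    have h1 : β⁻¹ • (S' • ∑ j, w j • a j) = β⁻¹ • (β • r) := by rw [hxe]
    rw [smul_smul, smul_smul, inv_mul_cancel₀ (ne_of_gt hβ), one_smul] at h1
    rw [← h1, Finset.smul_sum]
    apply Finset.sum_congr rfl
    intro j _
    rw [haeq j, smul_smul, smul_smul]
    congr 1
    rw [hc]
    ring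
  have hsumc : β * ∑ j, c j = S' := by
    rw [hc]
    rw [Finset.mul_sum]
    have : ∀ j ∈ Finset.univ, β * (β⁻¹ * (S' * w j)) = S' * w j := by
      intro j _
      field_simp
    rw [Finset.sum_congr rfl this, ← Finset.mul_sum, hw.2, mul_one]
  obtain ⟨u, v, hple⟩ := primal_construction Y hβ xs m hm c hcnn sgn hsgn uu huu
  have hnorm : ‖(∑ j, (c j * sgn j) • atom Y (uu j)) - toE xs‖ = ‖zs‖ := by
    rw [hr_eq, hr]
    rw [show toE xs - zs - toE xs = -zs by abel, norm_neg]
  rw [hnorm, hsumc] at hple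
  -- the dual value at the projection point
  have hc₀mem : (-(1 / 2) * l2 (ofE zs - xs) ^ 2 + (1 / 2) * l2 xs ^ 2) ∈ Dv := by
    refine ⟨ofE zs, ?_, rfl⟩
    apply (hfeas_iff (ofE zs)).mpr
    rw [toE_ofE]
    exact hzs
  have hc₀val : -(1 / 2) * l2 (ofE zs - xs) ^ 2 + (1 / 2) * l2 xs ^ 2
      = (1 / 2) * ‖zs‖ ^ 2 + S' := by
    rw [dual_value_eq, toE_ofE]
    have h1 : toE xs = zs + r := by rw [hr]; abel
    rw [h1, inner_add_right, real_inner_self_eq_norm_sq, hS', real_inner_comm]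
    ring
  have hlow : pStar Y xs β m ≤ sSup Dv := by
    have h1 : pStar Y xs β m ≤ primalObj Y xs β m u v := csInf_le hPbdd ⟨u, v, rfl⟩
    have h2 : (-(1 / 2) * l2 (ofE zs - xs) ^ 2 + (1 / 2) * l2 xs ^ 2) ≤ sSup Dv :=
      le_csSup hDbdd hc₀mem
    rw [hc₀val] at h2
    linarith
  exact le_antisymm hlow hub
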